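/- Let Q, G_b, R_b, B_e be reals with G_b ≥ 0, R_b ≥ 0, 0 ≤ G_b + R_b ≤ C_char, 0 ≤ B_e ≤ C_dis, and suppose −V·P_max < Q ≤ 0. Then Q' = Q + G_b + R_b − B_e satisfies −V·P_max − C_dis < Q' ≤ B̄_max − B̄_min − C_dis − V·P_max. -/
import Mathlib


/-- One-step queue bound in the region `−V·P_max < Q ≤ 0`. -/
theorem queue_one_step_case2
    (Pmax Cchar Cdis Bminbar Bmaxbar V : ℝ)
    (hPmax : 0 < Pmax) (hCchar : 0 ≤ Cchar) (hCdis : 0 ≤ Cdis)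
    (hV0 : 0 < V)
    (hVmax : V ≤ (Bmaxbar - Bminbar - Cdis - Cchar) / Pmax)
    (Q Gb Rb Be Q' : ℝ)
    (hGb : 0 ≤ Gb) (hRb : 0 ≤ Rb)
    (hchar0 : 0 ≤ Gb + Rb) (hchar : Gb + Rb ≤ Cchar)
    (hBe0 : 0 ≤ Be) (hBe : Be ≤ Cdis)
    (hQlb : -(V * Pmax) < Q) (hQub : Q ≤ 0)
    (hQ' : Q' = Q + Gb + Rb - Be) :
    -(V * Pmax) - Cdis < Q' ∧ Q' ≤ Bmaxbar - Bminbar - Cdis - V * Pmax := by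
  have h : V * Pmax ≤ Bmaxbar - Bminbar - Cdis - Cchar := by
    nlinarith [(le_div_iff₀ hPmax).mp hVmax]
  constructor <;> nlinarith
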